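/- In the heterogeneous SEIR model restricted to the set Z = {x : γ(x) = 0}, with ∂_t(E+I)(t,x) = (1-(E+I)(t,x)) ∫_Ω β(x,y) I(t,y) dy ≥ β_min P(Z) (1-(E+I)(t,x)) I_Z(t) and (d/dt) I_Z(t) ≥ α_min E_Z(t), where E_Z(t) = ∫_Z E(t,x) dx, I_Z(t) = ∫_Z I(t,x) dx, α_min > 0, β_min > 0, P(Z) > 0, and E_Z(0)+I_Z(0) > 0, it follows that I_Z(t) → P(Z)·1 normalized, i.e., (E_Z+I_Z)(t) → P(Z) with E_Z(t) → 0, hence I_Z(t) → P(Z) as t → ∞. -/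

import Mathlib

open Filter

private lemma monoOn_of_deriv' (f : ℝ → ℝ) (T : ℝ)
    (hdiff : ∀ t ≥ T, DifferentiableAt ℝ f t)
    (hd : ∀ t > T, 0 ≤ deriv f t) : MonotoneOn f (Set.Ici T) := by
  apply monotoneOn_of_deriv_nonneg (convex_Ici T)
  · exact fun t ht => (hdiff t ht).continuousAt.continuousWithinAt
  · rw [interior_Ici]
    exact fun t ht => (hdiff t (le_of_lt ht)).differentiableWithinAt
  · rw [interior_Ici]
    exact fun t ht => hd t ht

private lemma gron (g : ℝ → ℝ) (a K T : ℝ) (ha : 0 < a) (hK : 0 ≤ K)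
    (hgdiff : ∀ t ≥ T, DifferentiableAt ℝ g t)
    (hgT : 0 ≤ g T)
    (hd : ∀ t ≥ T, a * (K - g t) ≤ deriv g t)
    {ε : ℝ} (hε : 0 < ε) : ∀ᶠ t in atTop, K - ε ≤ g t := by
  set φ : ℝ → ℝ := fun t => Real.exp (a * t) * (g t - K) with hφ
  have hDφ : ∀ t ≥ T, HasDerivAt φ
      (Real.exp (a*t) * a * (g t - K) + Real.exp (a*t) * deriv g t) t := by
    intro t ht
    have h1 : HasDerivAt (fun t => Real.exp (a*t)) (Real.exp (a*t) * a) t := by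
      simpa using ((hasDerivAt_id t).const_mul a).exp
    exact h1.mul ((hgdiff t ht).hasDerivAt.sub_const K)
  have hmono : MonotoneOn φ (Set.Ici T) := by
    apply monoOn_of_deriv' φ T (fun t ht => (hDφ t ht).differentiableAt)
    intro t ht
    rw [(hDφ t ht.le).deriv]
    have h2 := hd t ht.le
    have hexp := Real.exp_pos (a*t)
    nlinarith [mul_le_mul_of_nonneg_left h2 hexp.le]
  have hbound : ∀ t ≥ T, K - K * Real.exp (a*(T - t)) ≤ g t := by
    intro t ht
    have h2 : φ T ≤ φ t := hmono Set.self_mem_Ici ht ht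
    have h3 : -(K * Real.exp (a*T)) ≤ φ T := by
      have hE := Real.exp_pos (a*T)
      simp only [hφ]
      nlinarith
    have key : -(K * Real.exp (a*T)) ≤ Real.exp (a*t) * (g t - K) := le_trans h3 h2
    have hprod : Real.exp (a*t) * Real.exp (a*(T - t)) = Real.exp (a*T) := by
      rw [← Real.exp_add]; ring_nf
    nlinarith [Real.exp_pos (a*t), Real.exp_pos (a*(T-t))]
  have h4 : Tendsto (fun t : ℝ => a*(T - t)) atTop atBot := by
    apply Tendsto.const_mul_atBot ha
    exact (tendsto_atBot_add_const_left atTop T tendsto_neg_atTop_atBot).congr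
      (fun x => (sub_eq_add_neg T x).symm)
  have h5 : Tendsto (fun t => K * Real.exp (a*(T - t))) atTop (nhds 0) := by
    simpa using (Real.tendsto_exp_atBot.comp h4).const_mul K
  have h6 : ∀ᶠ t in atTop, K * Real.exp (a*(T - t)) < ε :=
    h5.eventually_lt_const hε
  filter_upwards [h6, eventually_ge_atTop T] with t h1t h2t
  linarith [hbound t h2t]

/-- SEIR on the zero-recovery set: the differential inequalities for
f = (E_Z+I_Z)/P(Z) and g = I_Z force f → 1 and g → P(Z). -/
theorem seir_zero_recovery_set_full_infection
    (f g : ℝ → ℝ) (c αmin PZ : ℝ)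
    (hc : 0 < c) (hα : 0 < αmin) (hPZ : 0 < PZ)
    (hfdiff : ∀ t ≥ (0:ℝ), DifferentiableAt ℝ f t)
    (hgdiff : ∀ t ≥ (0:ℝ), DifferentiableAt ℝ g t)
    (hfrange : ∀ t ≥ (0:ℝ), f t ∈ Set.Icc (0:ℝ) 1)
    (hgrange : ∀ t ≥ (0:ℝ), 0 ≤ g t ∧ g t ≤ PZ * f t)
    (hf' : ∀ t ≥ (0:ℝ), c * (1 - f t) * g t ≤ deriv f t)
    (hg' : ∀ t ≥ (0:ℝ), αmin * (PZ * f t - g t) ≤ deriv g t)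
    (hf0 : 0 < f 0) :
    Tendsto f atTop (nhds 1) ∧ Tendsto g atTop (nhds PZ) := by
  -- f is monotone on [0, ∞)
  have hmonof : MonotoneOn f (Set.Ici 0) := by
    apply monoOn_of_deriv' f 0 hfdiff
    intro t ht
    refine le_trans ?_ (hf' t ht.le)
    have h1 := (hfrange t ht.le).2
    have h2 := (hgrange t ht.le).1
    have : 0 ≤ c * (1 - f t) := mul_nonneg hc.le (by linarith)
    exact mul_nonneg this h2
  set L : ℝ := sSup (f '' Set.Ici 0) with hL
  have hbdd : BddAbove (f '' Set.Ici 0) := by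
    refine ⟨1, ?_⟩
    rintro _ ⟨t, ht, rfl⟩
    exact (hfrange t ht).2
  have hne : (f '' Set.Ici 0).Nonempty := ⟨f 0, 0, Set.self_mem_Ici, rfl⟩
  have hfle : ∀ t ≥ (0:ℝ), f t ≤ L := fun t ht => le_csSup hbdd ⟨t, ht, rfl⟩
  have hL1 : L ≤ 1 := csSup_le hne (by rintro _ ⟨t, ht, rfl⟩; exact (hfrange t ht).2)
  have hL0 : 0 < L := lt_of_lt_of_le hf0 (hfle 0 le_rfl)
  have hKpos : 0 < PZ * f 0 := mul_pos hPZ hf0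
  -- L = 1
  have hLeq : L = 1 := by
    by_contra hne1
    have hLlt : L < 1 := lt_of_le_of_ne hL1 hne1
    -- g is eventually ≥ PZ * f 0 / 2
    have hd0 : ∀ t ≥ (0:ℝ), αmin * (PZ * f 0 - g t) ≤ deriv g t := by
      intro t ht
      refine le_trans ?_ (hg' t ht)
      have hf0t : f 0 ≤ f t := hmonof Set.self_mem_Ici ht ht
      nlinarith [mul_le_mul_of_nonneg_left (mul_le_mul_of_nonneg_left hf0t hPZ.le) hα.le]
    have hglow := gron g αmin (PZ * f 0) 0 hα hKpos.le hgdiff (hgrange 0 le_rfl).1 hd0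
      (half_pos hKpos)
    obtain ⟨T1, hT1⟩ := eventually_atTop.1 (hglow.and (eventually_ge_atTop 0))
    set C : ℝ := c * (1 - L) * (PZ * f 0 / 2) with hC
    have hCpos : 0 < C := by
      apply mul_pos (mul_pos hc (by linarith)) (half_pos hKpos)
    -- ψ t = f t - C t is monotone on [T1, ∞)
    have hψD : ∀ t ≥ T1, HasDerivAt (fun t => f t - C * t) (deriv f t - C) t := by
      intro t ht
      exact ((hfdiff t (hT1 t ht).2).hasDerivAt).sub
        (by simpa using (hasDerivAt_id t).const_mul C)
    have hmonoψ : MonotoneOn (fun t => f t - C * t) (Set.Ici T1) := by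
      apply monoOn_of_deriv' _ T1 (fun t ht => (hψD t ht).differentiableAt)
      intro t ht
      rw [(hψD t ht.le).deriv]
      have h1 := (hT1 t ht.le).1
      have h2 := hfle t (hT1 t ht.le).2
      have h3 := (hgrange t (hT1 t ht.le).2).1
      have h4 := hf' t (hT1 t ht.le).2
      have h5 : c * (1 - L) * (PZ * f 0 / 2) ≤ c * (1 - f t) * g t := by
        have e0 : 0 ≤ c * (1 - L) := mul_nonneg hc.le (by linarith)
        have e1 : c * (1 - L) ≤ c * (1 - f t) :=
          mul_le_mul_of_nonneg_left (by linarith) hc.le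
        have e2 : PZ * f 0 / 2 ≤ g t := by linarith
        calc c * (1 - L) * (PZ * f 0 / 2) ≤ c * (1 - L) * g t :=
              mul_le_mul_of_nonneg_left e2 e0
          _ ≤ c * (1 - f t) * g t := mul_le_mul_of_nonneg_right e1 h3
      simp only [hC]
      linarith
    have hT1mem : T1 ∈ Set.Ici T1 := Set.self_mem_Ici
    have ht2 : T1 ≤ T1 + 2 / C := by
      have := div_pos (by norm_num : (0:ℝ) < 2) hCpos
      linarith
    have := hmonoψ hT1mem ht2 ht2
    have hfr1 := (hfrange T1 (hT1 T1 le_rfl).2).1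
    have hfr2 := (hfrange (T1 + 2/C) (by linarith [(hT1 T1 le_rfl).2])).2
    have hCne : C ≠ 0 := ne_of_gt hCpos
    have : f T1 + 2 ≤ f (T1 + 2/C) := by
      have hdiv : C * (2 / C) = 2 := by field_simp
      simp only at this
      nlinarith
    linarith
  -- f → 1
  have htf : Tendsto f atTop (nhds 1) := by
    rw [tendsto_order]
    constructor
    · intro b hb
      have : ∃ t ≥ (0:ℝ), b < f t := by
        by_contra h
        push_neg at h
        have : L ≤ b := csSup_le hne (by rintro _ ⟨t, ht, rfl⟩; exact h t ht)
        rw [hLeq] at this; linarith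
      obtain ⟨t0, ht0, hbt0⟩ := this
      filter_upwards [eventually_ge_atTop t0] with t ht
      exact lt_of_lt_of_le hbt0 (hmonof ht0 (le_trans ht0 ht) ht)
    · intro b hb
      filter_upwards [eventually_ge_atTop 0] with t ht
      exact lt_of_le_of_lt (hfrange t ht).2 hb
  refine ⟨htf, ?_⟩
  -- g → PZ
  rw [tendsto_order]
  constructor
  · -- lower bounds
    have claim : ∀ b', 0 ≤ b' → b' < PZ → ∀ᶠ t in atTop, b' < g t := by
      intro b' hb'0 hb'
      set ε : ℝ := (PZ - b') / 3 with hε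
      have hεpos : 0 < ε := by simp only [hε]; linarith
      have hf_ev : ∀ᶠ t in atTop, 1 - ε / PZ < f t :=
        (tendsto_order.1 htf).1 _ (by
          have := div_pos hεpos hPZ
          linarith)
      obtain ⟨T, hT⟩ := eventually_atTop.1 (hf_ev.and (eventually_ge_atTop 0))
      have hKpos' : 0 ≤ PZ - ε := by
        have : ε ≤ PZ / 3 := by simp only [hε]; linarith
        linarith
      have hd : ∀ t ≥ T, αmin * ((PZ - ε) - g t) ≤ deriv g t := by
        intro t ht
        refine le_trans ?_ (hg' t (hT t ht).2)
        have h1 := (hT t ht).1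
        have : PZ - ε ≤ PZ * f t := by
          have := mul_lt_mul_of_pos_left h1 hPZ
          have hd2 : PZ * (1 - ε / PZ) = PZ - ε := by field_simp
          nlinarith
        nlinarith
      have hgl := gron g αmin (PZ - ε) T hα hKpos'
        (fun t ht => hgdiff t (hT t ht).2) (hgrange T (hT T le_rfl).2).1 hd hεpos
      filter_upwards [hgl] with t ht
      have : PZ - 2*ε = (PZ + 2*b')/3 := by simp only [hε]; ring
      nlinarith
    intro b hb
    rcases le_or_gt 0 b with h0 | h0
    · exact claim b h0 hb
    · filter_upwards [claim 0 le_rfl hPZ] with t ht; linarith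
  · intro b hb
    filter_upwards [eventually_ge_atTop 0] with t ht
    have h1 := (hfrange t ht).2
    have h2 := (hgrange t ht).2
    nlinarith
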